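/- Let X be a nonempty finite set and u, v : X → ℝ with v more risk-averse than u. Then: (i) for any x, y ∈ X, u(x) ≥ u(y) implies v(x) ≥ v(y), and u(x) > u(y) implies v(x) > v(y); and (ii) for any x, y, z ∈ X with u(x) < u(y) < u(z), one has (u(z)−u(y))/(u(y)−u(x)) ≥ (v(z)−v(y))/(v(y)−v(x)). -/

import Mathlib

open Finset

def IsDist {X : Type} [Fintype X] (p : X → ℝ) : Prop :=
  (∀ x, 0 ≤ p x) ∧ (∑ x, p x) = 1

def NSD {X S : Type} [Fintype X] (S' : Set S) (U : X → S → ℝ) : Set X :=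
  {x | ¬ ∃ p : X → ℝ, IsDist p ∧ ∀ s ∈ S', (∑ y, U y s * p y) > U x s}

def NWD {X S : Type} [Fintype X] (S' : Set S) (U : X → S → ℝ) : Set X :=
  {x | ¬ ∃ p : X → ℝ, IsDist p ∧ (∀ s ∈ S', (∑ y, U y s * p y) ≥ U x s) ∧
      (∃ s ∈ S', (∑ y, U y s * p y) > U x s)}

def NSDhat {X S : Type} (S' : Set S) (U : X → S → ℝ) : Set X :=
  {x | ¬ ∃ y : X, ∀ s ∈ S', U y s > U x s}

def NWDhat {X S : Type} (S' : Set S) (U : X → S → ℝ) : Set X :=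
  {x | ¬ ∃ y : X, (∀ s ∈ S', U y s ≥ U x s) ∧ (∃ s ∈ S', U y s > U x s)}

theorem stmt1 {X : Type} [Fintype X] [Nonempty X] (u v : X → ℝ)
    (hra : ∀ (x : X) (p : X → ℝ), IsDist p →
      (((∑ y, v y * p y) ≥ v x → (∑ y, u y * p y) ≥ u x) ∧
       ((∑ y, v y * p y) > v x → (∑ y, u y * p y) > u x))) :
    (∀ x y : X, (u x ≥ u y → v x ≥ v y) ∧ (u x > u y → v x > v y)) ∧
    (∀ x y z : X, u x < u y → u y < u z →
      (u z - u y) / (u y - u x) ≥ (v z - v y) / (v y - v x)) := by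
  classical

  -- point mass distribution
  have hpm : ∀ x : X, IsDist (fun w => if w = x then (1:ℝ) else 0) := by
    intro x
    constructor
    · intro w; by_cases h : w = x <;> simp [h]
    · simp
  have hpmsum : ∀ (f : X → ℝ) (x : X),
      (∑ w, f w * (if w = x then (1:ℝ) else 0)) = f x := by
    intro f x
    simp [mul_ite]
  -- part (i)
  have hi : ∀ x y : X, (u x ≥ u y → v x ≥ v y) ∧ (u x > u y → v x > v y) := by
    intro x y
    constructor
    · intro h
      by_contra hc
      push_neg at hc
      have := (hra x (fun w => if w = y then 1 else 0) (hpm y)).2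
      rw [hpmsum, hpmsum] at this
      exact absurd (this hc) (not_lt.2 h)
    · intro h
      by_contra hc
      push_neg at hc
      have := (hra x (fun w => if w = y then 1 else 0) (hpm y)).1
      rw [hpmsum, hpmsum] at this
      exact absurd (this hc) (not_le.2 h)
  refine ⟨hi, ?_⟩
  intro x y z hxy hyz
  have hvxy : v x < v y := (hi y x).2 hxy
  have hvyz : v y < v z := (hi z y).2 hyz
  have hxz : x ≠ z := fun h => by rw [h] at hxy; linarith
  have hd : (0:ℝ) < v z - v x := by linarith
  set t : ℝ := (v y - v x) / (v z - v x) with ht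
  have ht0 : 0 ≤ t := div_nonneg (by linarith) hd.le
  have ht1 : t ≤ 1 := by
    rw [ht, div_le_one hd]; linarith
  set p : X → ℝ := fun w => if w = z then t else if w = x then 1 - t else 0 with hp
  have hsum : ∀ f : X → ℝ, (∑ w, f w * p w) = f z * t + f x * (1 - t) := by
    intro f
    have : (∑ w, f w * p w) = ∑ w ∈ ({z, x} : Finset X), f w * p w := by
      refine (Finset.sum_subset (Finset.subset_univ _) ?_).symm
      intro w _ hw
      simp only [Finset.mem_insert, Finset.mem_singleton, not_or] at hw
      simp [hp, hw.1, hw.2]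
    rw [this, Finset.sum_pair (Ne.symm hxz)]
    simp [hp, hxz, Ne.symm hxz]
  have hdist : IsDist p := by
    constructor
    · intro w
      simp only [hp]
      split
      · exact ht0
      · split
        · linarith
        · exact le_refl 0
    · have := hsum (fun _ => 1)
      simp only [one_mul] at this
      rw [this]; ring
  have hvp : (∑ w, v w * p w) = v y := by
    rw [hsum]
    have : t * (v z - v x) = v y - v x := div_mul_cancel₀ _ hd.ne'
    nlinarith [this]
  have hup := (hra y p hdist).1 hvp.ge
  rw [hsum] at hup
  have key : u z * (v y - v x) + u x * (v z - v y) ≥ u y * (v z - v x) := by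
    have h1 : u z * t * (v z - v x) = u z * (v y - v x) := by
      rw [ht]; field_simp
    have h2 : u x * (1 - t) * (v z - v x) = u x * (v z - v y) := by
      rw [ht]; field_simp; ring
    nlinarith [mul_le_mul_of_nonneg_right hup hd.le]
  rw [ge_iff_le, div_le_div_iff₀ (by linarith) (by linarith)]
  nlinarith [key]
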